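/- Let a > 0, c > 0, L₁, L₂ > 0. There exist constants C > 0 and ν̄ > 0 such that for all 0 < ν ≤ ν̄, all ω ∈ ℝ, and all x ∈ [−L₁, L₂], the solution v̂ of the previous boundary value problem satisfies |v̂(x, ω)| ≤ (4ν/a²) |q(ω)| e^{Re λ₊(ω) (x − L₂)} ≤ C ν |q(ω)|. -/

import Mathlib

open Complex

/-- The characteristic root `λ₊(ω)`, with the principal square root. -/
noncomputable def lamPlus (a c ν ω : ℝ) : ℂ :=
  ((a : ℂ) + ((a : ℂ) ^ 2 + 4 * (ν : ℂ) * ((c : ℂ) + (ω : ℂ) * Complex.I)) ^ (1 / 2 : ℂ)) /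
    (2 * (ν : ℂ))

/-- The characteristic root `λ₋(ω)`. -/
noncomputable def lamMinus (a c ν ω : ℝ) : ℂ :=
  ((a : ℂ) - ((a : ℂ) ^ 2 + 4 * (ν : ℂ) * ((c : ℂ) + (ω : ℂ) * Complex.I)) ^ (1 / 2 : ℂ)) /
    (2 * (ν : ℂ))

/-- The explicit Fourier-mode solution of the boundary value problem. -/
noncomputable def vhat (a c ν L₁ L₂ : ℝ) (q : ℝ → ℂ) (x ω : ℝ) : ℂ :=
  q ω * (Complex.exp (lamPlus a c ν ω * ((x : ℂ) + L₁)) -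
      Complex.exp (lamMinus a c ν ω * ((x : ℂ) + L₁))) /
    ((ν : ℂ) * (lamPlus a c ν ω) ^ 2 * Complex.exp (lamPlus a c ν ω * ((L₂ : ℂ) + L₁)) -
      (ν : ℂ) * (lamMinus a c ν ω) ^ 2 * Complex.exp (lamMinus a c ν ω * ((L₂ : ℂ) + L₁)))

section Aux

variable (a c ν ω : ℝ)

/-- The discriminant. -/
noncomputable def discZ (a c ν ω : ℝ) : ℂ :=
  (a : ℂ) ^ 2 + 4 * (ν : ℂ) * ((c : ℂ) + (ω : ℂ) * Complex.I)

/-- The principal square root of the discriminant. -/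
noncomputable def sqrtZ (a c ν ω : ℝ) : ℂ := discZ a c ν ω ^ (1 / 2 : ℂ)

lemma discZ_re : (discZ a c ν ω).re = a ^ 2 + 4 * ν * c := by
  simp [discZ, pow_two, Complex.mul_re, Complex.mul_im, Complex.add_re]

lemma sqrtZ_sq : sqrtZ a c ν ω ^ 2 = discZ a c ν ω := by
  have h : (1 / 2 : ℂ) = ((2 : ℕ) : ℂ)⁻¹ := by norm_num
  rw [sqrtZ, h, Complex.cpow_nat_inv_pow _ two_ne_zero]

lemma sqrtZ_re_pos (ha : 0 < a) (hc : 0 < c) (hν : 0 < ν) : 0 < (sqrtZ a c ν ω).re := by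
  have hzre : 0 < (discZ a c ν ω).re := by
    rw [discZ_re]; positivity
  have hz0 : discZ a c ν ω ≠ 0 := by
    intro h; rw [h] at hzre; simp at hzre
  have harg : |Complex.arg (discZ a c ν ω)| < Real.pi / 2 :=
    Complex.abs_arg_lt_pi_div_two_iff.mpr (Or.inl hzre)
  rw [sqrtZ, Complex.cpow_def_of_ne_zero hz0, Complex.exp_re]
  have him : (Complex.log (discZ a c ν ω) * (1 / 2)).im =
      Complex.arg (discZ a c ν ω) / 2 := by
    simp [Complex.mul_im, Complex.log_im]
    ring
  rw [him]
  have hπ : 0 < Real.pi := Real.pi_pos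
  have hcos : 0 < Real.cos (Complex.arg (discZ a c ν ω) / 2) := by
    apply Real.cos_pos_of_mem_Ioo
    rw [Set.mem_Ioo]
    obtain ⟨h1, h2⟩ := abs_lt.mp harg
    constructor <;> linarith
  positivity

lemma sqrtZ_re_ge (ha : 0 < a) (hc : 0 < c) (hν : 0 < ν) : a ≤ (sqrtZ a c ν ω).re := by
  set s := sqrtZ a c ν ω with hs
  have h1 : s ^ 2 = discZ a c ν ω := sqrtZ_sq a c ν ω
  have h2 : s.re ^ 2 - s.im ^ 2 = a ^ 2 + 4 * ν * c := by
    have h := congrArg Complex.re h1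
    rw [discZ_re] at h
    rw [← h]
    simp [pow_two, Complex.mul_re]
  have h3 : 0 < s.re := sqrtZ_re_pos a c ν ω ha hc hν
  nlinarith [sq_nonneg s.im, mul_pos hν hc]

end Aux

set_option maxHeartbeats 1600000 in
/-- Uniform small-viscosity bound for the Fourier modes:
`|v̂(x,ω)| ≤ (4ν/a²)|q(ω)| e^{Re λ₊ (x−L₂)} ≤ Cν|q(ω)|`. -/
theorem fourier_mode_smallness (a c L₁ L₂ : ℝ) (ha : 0 < a) (hc : 0 < c)
    (hL₁ : 0 < L₁) (hL₂ : 0 < L₂) :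
    ∃ C > 0, ∃ νbar > 0, ∀ ν : ℝ, 0 < ν → ν ≤ νbar → ∀ q : ℝ → ℂ, ∀ ω : ℝ,
      ∀ x ∈ Set.Icc (-L₁) L₂,
        ‖vhat a c ν L₁ L₂ q x ω‖ ≤
          4 * ν / a ^ 2 * ‖q ω‖ * Real.exp ((lamPlus a c ν ω).re * (x - L₂)) ∧
        4 * ν / a ^ 2 * ‖q ω‖ * Real.exp ((lamPlus a c ν ω).re * (x - L₂)) ≤
          C * ν * ‖q ω‖ := by
  have hlog2 : (0 : ℝ) < Real.log 2 := Real.log_pos one_lt_two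
  refine ⟨4 / a ^ 2, by positivity, a * (L₂ + L₁) / Real.log 2, by positivity, ?_⟩
  intro ν hν hνb q ω x hx
  obtain ⟨hx1, hx2⟩ := hx
  set s : ℂ := sqrtZ a c ν ω with hsdef
  have hsre : a ≤ s.re := sqrtZ_re_ge a c ν ω ha hc hν
  have h2ν : (0 : ℝ) < 2 * ν := by linarith
  -- lamPlus and lamMinus in terms of s
  have hlp : lamPlus a c ν ω = ((a : ℂ) + s) / ((2 * ν : ℝ) : ℂ) := by
    rw [lamPlus]; push_cast; rfl
  have hlm : lamMinus a c ν ω = ((a : ℂ) - s) / ((2 * ν : ℝ) : ℂ) := by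
    rw [lamMinus]; push_cast; rfl
  set p : ℝ := (a + s.re) / (2 * ν) with hpdef
  set m : ℝ := (a - s.re) / (2 * ν) with hmdef
  have hpre : (lamPlus a c ν ω).re = p := by
    rw [hlp, Complex.div_ofReal_re]; simp [hpdef]
  have hmre : (lamMinus a c ν ω).re = m := by
    rw [hlm, Complex.div_ofReal_re]; simp [hmdef]
  have hp_ge : a / ν ≤ p := by
    rw [hpdef, div_le_div_iff₀ hν h2ν]; nlinarith
  have hp_pos : 0 < p := lt_of_lt_of_le (by positivity) hp_ge
  have hmp : m ≤ p := by
    rw [hmdef, hpdef, div_le_div_iff₀ h2ν h2ν]; nlinarith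
  -- |lamMinus| ≤ |lamPlus|
  have hn1 : Complex.normSq ((a : ℂ) - s) = (a - s.re) ^ 2 + s.im ^ 2 := by
    simp [Complex.normSq_apply]; ring
  have hn2 : Complex.normSq ((a : ℂ) + s) = (a + s.re) ^ 2 + s.im ^ 2 := by
    simp [Complex.normSq_apply]; ring
  have hkey : Norm.norm ((a : ℂ) - s) ≤ Norm.norm ((a : ℂ) + s) := by
    rw [Complex.norm_def, Complex.norm_def]
    apply Real.sqrt_le_sqrt
    rw [hn1, hn2]; nlinarith
  set A : ℝ := Norm.norm (lamPlus a c ν ω) with hAdef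
  have habs_le : Norm.norm (lamMinus a c ν ω) ≤ A := by
    rw [hAdef, hlp, hlm, norm_div, norm_div]
    gcongr
  have hpA : p ≤ A := hpre ▸ Complex.re_le_norm _
  have hA_pos : 0 < A := lt_of_lt_of_le hp_pos hpA
  -- numerator bound
  have hxL : (0 : ℝ) ≤ x + L₁ := by linarith
  have hcastx : (x : ℂ) + (L₁ : ℂ) = ((x + L₁ : ℝ) : ℂ) := by push_cast; ring
  have hcastM : (L₂ : ℂ) + (L₁ : ℂ) = ((L₂ + L₁ : ℝ) : ℂ) := by push_cast; ring
  have hre_mul : ∀ (lam : ℂ) (t : ℝ), (lam * (t : ℂ)).re = lam.re * t := by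
    intro lam t; simp [Complex.mul_re]
  have habs_expP : Norm.norm (Complex.exp (lamPlus a c ν ω * ((x : ℂ) + L₁))) =
      Real.exp (p * (x + L₁)) := by
    rw [hcastx, Complex.norm_exp, hre_mul, hpre]
  have habs_expM : Norm.norm (Complex.exp (lamMinus a c ν ω * ((x : ℂ) + L₁))) =
      Real.exp (m * (x + L₁)) := by
    rw [hcastx, Complex.norm_exp, hre_mul, hmre]
  have hnum : Norm.norm (Complex.exp (lamPlus a c ν ω * ((x : ℂ) + L₁)) -
      Complex.exp (lamMinus a c ν ω * ((x : ℂ) + L₁))) ≤ 2 * Real.exp (p * (x + L₁)) := by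
    calc Norm.norm (Complex.exp (lamPlus a c ν ω * ((x : ℂ) + L₁)) -
        Complex.exp (lamMinus a c ν ω * ((x : ℂ) + L₁)))
        ≤ Norm.norm (Complex.exp (lamPlus a c ν ω * ((x : ℂ) + L₁))) +
          Norm.norm (Complex.exp (lamMinus a c ν ω * ((x : ℂ) + L₁))) :=
        norm_sub_le _ _
      _ = Real.exp (p * (x + L₁)) + Real.exp (m * (x + L₁)) := by rw [habs_expP, habs_expM]
      _ ≤ 2 * Real.exp (p * (x + L₁)) := by
          have := Real.exp_le_exp.mpr (mul_le_mul_of_nonneg_right hmp hxL)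
          linarith
  -- denominator bound
  have hhalf : Real.exp (m * (L₂ + L₁)) ≤ 1 / 2 * Real.exp (p * (L₂ + L₁)) := by
    have hνM : ν * Real.log 2 ≤ a * (L₂ + L₁) := by
      rw [le_div_iff₀ hlog2] at hνb; linarith
    have h2 : Real.log 2 ≤ (p - m) * (L₂ + L₁) := by
      have hpm : p - m = s.re / ν := by
        rw [hpdef, hmdef]; field_simp; ring
      rw [hpm, div_mul_eq_mul_div, le_div_iff₀ hν]
      have := mul_le_mul_of_nonneg_right hsre (by linarith : (0:ℝ) ≤ L₂ + L₁)
      linarith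
    have h1 : m * (L₂ + L₁) ≤ p * (L₂ + L₁) - Real.log 2 := by
      have h2' : (p - m) * (L₂ + L₁) = p * (L₂ + L₁) - m * (L₂ + L₁) := by ring
      linarith
    calc Real.exp (m * (L₂ + L₁)) ≤ Real.exp (p * (L₂ + L₁) - Real.log 2) :=
        Real.exp_le_exp.mpr h1
      _ = 1 / 2 * Real.exp (p * (L₂ + L₁)) := by
          rw [Real.exp_sub, Real.exp_log two_pos]; ring
  have habsν : Norm.norm ((ν : ℂ)) = ν := by
    rw [Complex.norm_real, Real.norm_eq_abs, abs_of_pos hν]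
  have habs_u : Norm.norm ((ν : ℂ) * (lamPlus a c ν ω) ^ 2 *
      Complex.exp (lamPlus a c ν ω * ((L₂ : ℂ) + L₁))) = ν * A ^ 2 * Real.exp (p * (L₂ + L₁)) := by
    rw [norm_mul, norm_mul, norm_pow, habsν, hcastM, Complex.norm_exp, hre_mul, hpre]
  have habs_v : Norm.norm ((ν : ℂ) * (lamMinus a c ν ω) ^ 2 *
      Complex.exp (lamMinus a c ν ω * ((L₂ : ℂ) + L₁))) ≤
      ν * A ^ 2 * (1 / 2 * Real.exp (p * (L₂ + L₁))) := by
    rw [norm_mul, norm_mul, norm_pow, habsν, hcastM, Complex.norm_exp, hre_mul, hmre]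
    have h1 : Norm.norm (lamMinus a c ν ω) ^ 2 ≤ A ^ 2 := by
      apply pow_le_pow_left₀ (norm_nonneg _) habs_le
    calc ν * Norm.norm (lamMinus a c ν ω) ^ 2 * Real.exp (m * (L₂ + L₁))
        ≤ ν * A ^ 2 * Real.exp (m * (L₂ + L₁)) := by
          have h2 : ν * Norm.norm (lamMinus a c ν ω) ^ 2 ≤ ν * A ^ 2 :=
            mul_le_mul_of_nonneg_left h1 hν.le
          exact mul_le_mul_of_nonneg_right h2 (Real.exp_pos _).le
      _ ≤ ν * A ^ 2 * (1 / 2 * Real.exp (p * (L₂ + L₁))) :=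
          mul_le_mul_of_nonneg_left hhalf (by positivity)
  set D : ℂ := (ν : ℂ) * (lamPlus a c ν ω) ^ 2 * Complex.exp (lamPlus a c ν ω * ((L₂ : ℂ) + L₁)) -
      (ν : ℂ) * (lamMinus a c ν ω) ^ 2 * Complex.exp (lamMinus a c ν ω * ((L₂ : ℂ) + L₁)) with hDdef
  have hD : 1 / 2 * (ν * A ^ 2 * Real.exp (p * (L₂ + L₁))) ≤ Norm.norm D := by
    have hsub := norm_sub_norm_le ((ν : ℂ) * (lamPlus a c ν ω) ^ 2 *
        Complex.exp (lamPlus a c ν ω * ((L₂ : ℂ) + L₁)))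
        ((ν : ℂ) * (lamMinus a c ν ω) ^ 2 *
        Complex.exp (lamMinus a c ν ω * ((L₂ : ℂ) + L₁)))
    rw [habs_u] at hsub
    have hKE : (0:ℝ) < ν * A ^ 2 * Real.exp (p * (L₂ + L₁)) := by positivity
    rw [hDdef]
    linarith
  have hDpos : (0 : ℝ) < Norm.norm D := by
    have : (0:ℝ) < 1 / 2 * (ν * A ^ 2 * Real.exp (p * (L₂ + L₁))) := by positivity
    linarith
  -- putting it together
  have hvhat : Norm.norm (vhat a c ν L₁ L₂ q x ω) =
      Norm.norm (q ω) * Norm.norm (Complex.exp (lamPlus a c ν ω * ((x : ℂ) + L₁)) -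
        Complex.exp (lamMinus a c ν ω * ((x : ℂ) + L₁))) / Norm.norm D := by
    rw [vhat, norm_div, norm_mul]
  have hE : Real.exp (p * (x + L₁)) = Real.exp (p * (x - L₂)) * Real.exp (p * (L₂ + L₁)) := by
    rw [← Real.exp_add]; ring_nf
  have hKa : a ^ 2 / ν ≤ ν * A ^ 2 := by
    have hA : a / ν ≤ A := le_trans hp_ge hpA
    have hνA : a ≤ ν * A := by
      rw [div_le_iff₀ hν] at hA; linarith
    rw [div_le_iff₀ hν]
    nlinarith [mul_le_mul hνA hνA ha.le (by positivity : (0:ℝ) ≤ ν * A)]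
  constructor
  · rw [hpre, hvhat]
    have step1 : Norm.norm (q ω) * Norm.norm (Complex.exp (lamPlus a c ν ω * ((x : ℂ) + L₁)) -
        Complex.exp (lamMinus a c ν ω * ((x : ℂ) + L₁))) / Norm.norm D ≤
        Norm.norm (q ω) * (2 * Real.exp (p * (x + L₁))) /
        (1 / 2 * (ν * A ^ 2 * Real.exp (p * (L₂ + L₁)))) := by
      apply div_le_div₀ (by positivity) ?_ (by positivity) hD
      exact mul_le_mul_of_nonneg_left hnum (norm_nonneg _)
    refine le_trans step1 ?_
    have heq : Norm.norm (q ω) * (2 * Real.exp (p * (x + L₁))) /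
        (1 / 2 * (ν * A ^ 2 * Real.exp (p * (L₂ + L₁)))) =
        4 / (ν * A ^ 2) * (Norm.norm (q ω) * Real.exp (p * (x - L₂))) := by
      rw [hE]
      have hE2 : (0:ℝ) < Real.exp (p * (L₂ + L₁)) := Real.exp_pos _
      field_simp
      ring
    rw [heq]
    have hfrac : 4 / (ν * A ^ 2) ≤ 4 * ν / a ^ 2 := by
      rw [div_le_div_iff₀ (by positivity) (by positivity)]
      nlinarith [(div_le_iff₀ hν).mp hKa]
    calc 4 / (ν * A ^ 2) * (Norm.norm (q ω) * Real.exp (p * (x - L₂)))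
        ≤ 4 * ν / a ^ 2 * (Norm.norm (q ω) * Real.exp (p * (x - L₂))) := by
          apply mul_le_mul_of_nonneg_right hfrac (by positivity)
      _ = 4 * ν / a ^ 2 * Norm.norm (q ω) * Real.exp (p * (x - L₂)) := by ring
  · rw [hpre]
    have hexp1 : Real.exp (p * (x - L₂)) ≤ 1 := by
      apply Real.exp_le_one_iff.mpr
      apply mul_nonpos_of_nonneg_of_nonpos hp_pos.le
      linarith
    calc 4 * ν / a ^ 2 * Norm.norm (q ω) * Real.exp (p * (x - L₂))
        ≤ 4 * ν / a ^ 2 * Norm.norm (q ω) * 1 := by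
          apply mul_le_mul_of_nonneg_left hexp1 (by positivity)
      _ = 4 / a ^ 2 * ν * Norm.norm (q ω) := by ring
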